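/- There exists an absolute constant C > 0 such that for every r with 1/2 ≤ r < 1, ∫_Γ u1 · Q*_r(u1,u2) du1 du2 ≤ C · (1−r) · |log(1−r)|. -/

import Mathlib

open MeasureTheory Finset

/-- The triangle `Γ = {(u₁,u₂) : 0 ≤ u₂ ≤ u₁/3, 0 ≤ u₁ ≤ 1}`. -/
def GammaT : Set (ℝ × ℝ) := {u | 0 ≤ u.2 ∧ u.2 ≤ u.1 / 3 ∧ 0 ≤ u.1 ∧ u.1 ≤ 1}

/-- The classical Poisson kernel `p_r(x) = (1−r²)/(1 − 2r·cos x + r²)`. -/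
noncomputable def prP (r x : ℝ) : ℝ := (1 - r ^ 2) / (1 - 2 * r * Real.cos x + r ^ 2)

/-- The function `Q*_r`. -/
noncomputable def QstarR (r : ℝ) (u : ℝ × ℝ) : ℝ :=
  prP r (Real.pi * (u.1 + u.2)) * prP r (2 * Real.pi * u.2) +
    prP r (Real.pi * (u.1 - u.2)) * prP r (Real.pi * (u.1 + u.2)) +
    prP r (Real.pi * (u.1 - u.2)) * prP r (2 * Real.pi * u.2)

open Real

lemma one_sub_cos_bd (x : ℝ) (h0 : 0 ≤ x) (h1 : x ≤ 4*π/3) : x^2/(2*π^2) ≤ 1 - Real.cos x := by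
  have hπ := Real.pi_pos
  have hp2 : (0:ℝ) < π^2 := by positivity
  rcases le_or_gt x π with h | h
  · have h2 := Real.cos_le_one_sub_mul_cos_sq (x := x) (by rw [abs_of_nonneg h0]; exact h)
    have h3 : 2/π^2 * x^2 * π^2 = 2*x^2 := by field_simp
    rw [div_le_iff₀ (by positivity)]
    nlinarith [mul_le_mul_of_nonneg_right h2 hp2.le, sq_nonneg x]
  · have hc : Real.cos x ≤ 0 :=
      Real.cos_nonpos_of_pi_div_two_le_of_le (by linarith) (by linarith)
    rw [div_le_iff₀ (by positivity)]
    nlinarith [sq_nonneg x]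

lemma denom_pos {r : ℝ} (hr0 : 0 ≤ r) (hr1 : r < 1) (x : ℝ) :
    0 < 1 - 2 * r * Real.cos x + r ^ 2 := by
  nlinarith [Real.cos_le_one x, sq_nonneg (1 - r)]

lemma prP_nonneg {r : ℝ} (hr0 : 0 ≤ r) (hr1 : r < 1) (x : ℝ) : 0 ≤ prP r x :=
  div_nonneg (by nlinarith) (denom_pos hr0 hr1 x).le

lemma continuous_prP {r : ℝ} (hr0 : 0 ≤ r) (hr1 : r < 1) : Continuous (prP r) :=
  continuous_const.div (by continuity) (fun x => (denom_pos hr0 hr1 x).ne')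

lemma prP_key {r : ℝ} (hr : 1/2 ≤ r) (hr1 : r < 1) {x b : ℝ} (hx0 : 0 ≤ x)
    (hx1 : x ≤ 4*π/3) (hb : 0 ≤ b) (hbx : 4*b^2*π^2 ≤ 9*x^2) :
    prP r x ≤ 9*(1-r)/((1-r)^2 + b^2) := by
  have hπ := Real.pi_pos
  have hp2 : (0:ℝ) < π^2 := by positivity
  have hε : 0 < 1 - r := by linarith
  have hcos := one_sub_cos_bd x hx0 hx1
  have hD' : 0 < (1-r)^2 + x^2/(2*π^2) := by positivity
  have hd : (1-r)^2 + x^2/(2*π^2) ≤ 1 - 2*r*Real.cos x + r^2 := by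
    nlinarith [Real.cos_le_one x]
  have h1 : prP r x ≤ 2*(1-r)/((1-r)^2 + x^2/(2*π^2)) :=
    div_le_div₀ (by linarith) (by nlinarith) hD' hd
  refine h1.trans ?_
  rw [div_le_div_iff₀ hD' (by positivity)]
  have hx2 : 2*b^2 ≤ 9 * (x^2/(2*π^2)) := by
    have h9 : 9 * (x^2/(2*π^2)) * (2*π^2) = 9*x^2 := by field_simp
    nlinarith [div_nonneg (sq_nonneg x) (by positivity : (0:ℝ) ≤ 2*π^2)]
  nlinarith [sq_nonneg b, sq_nonneg (1-r), hε]

lemma Q_le {r : ℝ} (hr : 1/2 ≤ r) (hr1 : r < 1) {u : ℝ × ℝ} (hu : u ∈ GammaT) :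
    u.1 * QstarR r u ≤
      243*(1-r)^2 * (u.1/((1-r)^2+u.1^2)) * (1/((1-r)^2+u.2^2)) := by
  obtain ⟨hu2, hu23, hu10, hu11⟩ := hu
  have hπ := Real.pi_pos
  have hp2 : (0:ℝ) < π^2 := by positivity
  have hr0 : (0:ℝ) ≤ r := by linarith
  have hε : 0 < 1 - r := by linarith
  have hD1 : (0:ℝ) < (1-r)^2+u.1^2 := by positivity
  have hD2 : (0:ℝ) < (1-r)^2+u.2^2 := by positivity
  set a := 9*(1-r)/((1-r)^2+u.1^2) with ha
  set bb := 9*(1-r)/((1-r)^2+u.2^2) with hbb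
  have ha0 : 0 ≤ a := by positivity
  have hbb0 : 0 ≤ bb := by positivity
  have hab : a ≤ bb := by
    rw [ha, hbb, div_le_div_iff₀ hD1 hD2]
    nlinarith [mul_nonneg hε.le (mul_nonneg (by linarith : (0:ℝ) ≤ u.1 - u.2)
      (by linarith : (0:ℝ) ≤ u.1 + u.2))]
  have hs : (0:ℝ) ≤ u.1/3 - u.2 := by linarith
  have h1 : prP r (π*(u.1+u.2)) ≤ a :=
    prP_key hr hr1 (mul_nonneg hπ.le (by linarith))
      (by nlinarith [mul_nonneg hπ.le (by linarith : (0:ℝ) ≤ 4/3 - (u.1+u.2))]) hu10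
      (by nlinarith [mul_nonneg hp2.le (mul_nonneg hu10 hu2),
        mul_nonneg hp2.le (sq_nonneg u.1), mul_nonneg hp2.le (sq_nonneg u.2)])
  have h2 : prP r (π*(u.1-u.2)) ≤ a :=
    prP_key hr hr1 (mul_nonneg hπ.le (by linarith))
      (by nlinarith [mul_nonneg hπ.le (by linarith : (0:ℝ) ≤ 4/3 - (u.1-u.2))]) hu10
      (by nlinarith [mul_nonneg hp2.le (mul_nonneg hu10 hs),
        mul_nonneg hp2.le (mul_nonneg hs hs)])
  have h3 : prP r (2*π*u.2) ≤ bb :=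
    prP_key hr hr1 (by positivity)
      (by nlinarith [mul_nonneg hπ.le hu2]) hu2
      (by nlinarith [mul_nonneg hp2.le (sq_nonneg u.2)])
  have hQ : QstarR r u ≤ 3*(a*bb) := by
    have m1 : prP r (π*(u.1+u.2)) * prP r (2*π*u.2) ≤ a * bb :=
      mul_le_mul h1 h3 (prP_nonneg hr0 hr1 _) ha0
    have m2 : prP r (π*(u.1-u.2)) * prP r (π*(u.1+u.2)) ≤ a * bb :=
      (mul_le_mul h2 h1 (prP_nonneg hr0 hr1 _) ha0).trans
        (mul_le_mul_of_nonneg_left hab ha0)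
    have m3 : prP r (π*(u.1-u.2)) * prP r (2*π*u.2) ≤ a * bb :=
      mul_le_mul h2 h3 (prP_nonneg hr0 hr1 _) ha0
    unfold QstarR
    linarith
  calc u.1 * QstarR r u ≤ u.1 * (3*(a*bb)) := mul_le_mul_of_nonneg_left hQ hu10
    _ = 243*(1-r)^2 * (u.1/((1-r)^2+u.1^2)) * (1/((1-r)^2+u.2^2)) := by
        rw [ha, hbb]; ring

lemma I1_eq {ε : ℝ} (hε : 0 < ε) :
    ∫ x in Set.Icc (0:ℝ) 1, x/(ε^2+x^2) =
      (1/2)*Real.log (ε^2+1) - (1/2)*Real.log (ε^2) := by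
  rw [MeasureTheory.integral_Icc_eq_integral_Ioc,
    ← intervalIntegral.integral_of_le zero_le_one]
  have hftc : ∀ x ∈ Set.uIcc (0:ℝ) 1,
      HasDerivAt (fun y => (1/2)*Real.log (ε^2+y^2)) (x/(ε^2+x^2)) x := by
    intro x _
    have h1 : HasDerivAt (fun y : ℝ => ε^2+y^2) (2*x) x := by
      simpa using (hasDerivAt_pow 2 x).const_add (ε^2)
    have h2 := (h1.log (by positivity)).const_mul (1/2 : ℝ)
    refine h2.congr_deriv ?_
    field_simp
  rw [intervalIntegral.integral_eq_sub_of_hasDerivAt hftc (by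
    apply Continuous.intervalIntegrable
    exact continuous_id.div (by continuity) (fun x => ne_of_gt (by positivity)))]
  norm_num

lemma I2_le {ε : ℝ} (hε : 0 < ε) :
    ∫ y in Set.Icc (0:ℝ) 1, 1/(ε^2+y^2) ≤ 2/ε := by
  rw [MeasureTheory.integral_Icc_eq_integral_Ioc,
    ← intervalIntegral.integral_of_le zero_le_one]
  have hftc : ∀ y ∈ Set.uIcc (0:ℝ) 1,
      HasDerivAt (fun y => (1/ε)*Real.arctan (y/ε)) (1/(ε^2+y^2)) y := by
    intro y _
    have h1 : HasDerivAt (fun y : ℝ => y/ε) (1/ε) y := (hasDerivAt_id y).div_const ε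
    have h2 := ((Real.hasDerivAt_arctan (y/ε)).comp y h1).const_mul (1/ε : ℝ)
    refine h2.congr_deriv ?_
    field_simp
  rw [intervalIntegral.integral_eq_sub_of_hasDerivAt hftc (by
    apply Continuous.intervalIntegrable
    exact continuous_const.div (by continuity) (fun x => ne_of_gt (by positivity)))]
  simp only [zero_div, Real.arctan_zero, mul_zero, sub_zero]
  have h3 : Real.arctan (1/ε) ≤ π/2 := (Real.arctan_lt_pi_div_two _).le
  have h4 : π/2 ≤ 2 := by linarith [Real.pi_le_four]
  calc (1/ε)*Real.arctan (1/ε) ≤ (1/ε)*2 := by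
        apply mul_le_mul_of_nonneg_left (h3.trans h4) (by positivity)
    _ = 2/ε := by ring

set_option maxHeartbeats 1000000 in
theorem stmt_19 :
    ∃ C : ℝ, 0 < C ∧
      ∀ r : ℝ, 1 / 2 ≤ r → r < 1 →
        ∫ u in GammaT, u.1 * QstarR r u ≤ C * (1 - r) * |Real.log (1 - r)| := by
  refine ⟨1000, by norm_num, fun r hr hr1 => ?_⟩
  have hr0 : (0:ℝ) ≤ r := by linarith
  have hε : 0 < 1 - r := by linarith
  have hε2 : 1 - r ≤ 1/2 := by linarith
  set ε := 1 - r with hεdef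
  set L := |Real.log ε| with hLdef
  have hL0 : 0 ≤ L := abs_nonneg _
  have hlogneg : Real.log ε < 0 := Real.log_neg hε (by linarith)
  have hL : L = -Real.log ε := abs_of_neg hlogneg
  have hlog2 : Real.log 2 ≤ L := by
    have h1 : Real.log ε ≤ Real.log (1/2) := Real.log_le_log hε hε2
    have h2 : Real.log (1/2) = -Real.log 2 := by
      rw [one_div, Real.log_inv]
    linarith
  have hlog2' : (0:ℝ) < Real.log 2 := Real.log_pos (by norm_num)
  -- the dominating separable function
  set F : ℝ → ℝ := fun x => 243*ε^2 * (x/(ε^2+x^2)) with hF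
  set G : ℝ → ℝ := fun y => 1/(ε^2+y^2) with hG
  -- topological facts about GammaT
  have hclosed : IsClosed GammaT := by
    have he : GammaT = {u : ℝ×ℝ | 0 ≤ u.2} ∩ ({u | u.2 ≤ u.1/3} ∩
        ({u | 0 ≤ u.1} ∩ {u | u.1 ≤ 1})) := by
      ext u; simp only [GammaT, Set.mem_setOf_eq, Set.mem_inter_iff, and_assoc]
    rw [he]
    exact (isClosed_le continuous_const continuous_snd).inter
      ((isClosed_le continuous_snd (continuous_fst.div_const 3)).inter
        ((isClosed_le continuous_const continuous_fst).inter
          (isClosed_le continuous_fst continuous_const)))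
  have hsub : GammaT ⊆ Set.Icc (0:ℝ) 1 ×ˢ Set.Icc (0:ℝ) 1 := by
    rintro u ⟨h1, h2, h3, h4⟩
    exact ⟨⟨h3, h4⟩, ⟨h1, by linarith⟩⟩
  have hK : IsCompact GammaT :=
    ((isCompact_Icc.prod isCompact_Icc).of_isClosed_subset hclosed hsub)
  -- continuity of the integrand and of the dominating function
  have hQc : Continuous (QstarR r) := by
    have h := continuous_prP hr0 hr1
    have c1 : Continuous fun u : ℝ×ℝ => prP r (Real.pi*(u.1+u.2)) := h.comp (by continuity)
    have c2 : Continuous fun u : ℝ×ℝ => prP r (Real.pi*(u.1-u.2)) := h.comp (by continuity)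
    have c3 : Continuous fun u : ℝ×ℝ => prP r (2*Real.pi*u.2) := h.comp (by continuity)
    exact ((c1.mul c3).add (c2.mul c1)).add (c2.mul c3)
  have hfc : Continuous fun u : ℝ×ℝ => u.1 * QstarR r u := continuous_fst.mul hQc
  have hgc : Continuous fun u : ℝ×ℝ => F u.1 * G u.2 := by
    have hFc : Continuous F :=
      continuous_const.mul (continuous_id.div (by continuity)
        (fun x => ne_of_gt (by positivity)))
    have hGc : Continuous G :=
      continuous_const.div (by continuity) (fun x => ne_of_gt (by positivity))
    exact (hFc.comp continuous_fst).mul (hGc.comp continuous_snd)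
  -- step 1: compare on GammaT
  have step1 : ∫ u in GammaT, u.1 * QstarR r u ≤ ∫ u in GammaT, F u.1 * G u.2 := by
    refine setIntegral_mono_on (hfc.continuousOn.integrableOn_compact hK)
      (hgc.continuousOn.integrableOn_compact hK) hclosed.measurableSet ?_
    intro u hu
    have := Q_le hr hr1 hu
    calc u.1 * QstarR r u ≤ 243*(1-r)^2 * (u.1/((1-r)^2+u.1^2)) * (1/((1-r)^2+u.2^2)) := this
      _ = F u.1 * G u.2 := by rw [hF, hG]
  -- step 2: enlarge the domain
  have hsq : MeasurableSet (Set.Icc (0:ℝ) 1 ×ˢ Set.Icc (0:ℝ) 1) :=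
    measurableSet_Icc.prod measurableSet_Icc
  have step2 : ∫ u in GammaT, F u.1 * G u.2 ≤
      ∫ u in Set.Icc (0:ℝ) 1 ×ˢ Set.Icc (0:ℝ) 1, F u.1 * G u.2 := by
    refine setIntegral_mono_set
      (hgc.continuousOn.integrableOn_compact (isCompact_Icc.prod isCompact_Icc)) ?_
      (HasSubset.Subset.eventuallyLE hsub)
    refine (ae_restrict_iff' hsq).2 (ae_of_all _ ?_)
    intro u hu
    have h1 : 0 ≤ u.1 := hu.1.1
    rw [hF, hG]
    positivity
  -- step 3: Fubini for the product set
  have step3 : ∫ u in Set.Icc (0:ℝ) 1 ×ˢ Set.Icc (0:ℝ) 1, F u.1 * G u.2 =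
      (∫ x in Set.Icc (0:ℝ) 1, F x) * ∫ y in Set.Icc (0:ℝ) 1, G y := by
    rw [Measure.volume_eq_prod, setIntegral_prod_mul]
  -- step 4: evaluate/bound the one-dimensional integrals
  have hIF : ∫ x in Set.Icc (0:ℝ) 1, F x =
      243*ε^2 * ((1/2)*Real.log (ε^2+1) - (1/2)*Real.log (ε^2)) := by
    rw [hF]
    rw [MeasureTheory.integral_const_mul]
    rw [I1_eq hε]
  have hI1bd : (1/2)*Real.log (ε^2+1) - (1/2)*Real.log (ε^2) ≤ (3/2)*L := by
    have h1 : Real.log (ε^2+1) ≤ Real.log 2 := by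
      apply Real.log_le_log (by positivity); nlinarith
    have h2 : Real.log (ε^2) = 2 * Real.log ε := by
      rw [Real.log_pow]; norm_num
    linarith
  have hI1pos : 0 ≤ (1/2)*Real.log (ε^2+1) - (1/2)*Real.log (ε^2) := by
    have : Real.log (ε^2) ≤ Real.log (ε^2+1) := Real.log_le_log (by positivity) (by linarith)
    linarith
  have hIG0 : 0 ≤ ∫ y in Set.Icc (0:ℝ) 1, G y := by
    apply setIntegral_nonneg measurableSet_Icc
    intro y _; rw [hG]; positivity
  have hIG : ∫ y in Set.Icc (0:ℝ) 1, G y ≤ 2/ε := by rw [hG]; exact I2_le hε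
  -- combine
  have final : (∫ x in Set.Icc (0:ℝ) 1, F x) * (∫ y in Set.Icc (0:ℝ) 1, G y) ≤
      (243*ε^2 * ((3/2)*L)) * (2/ε) := by
    apply mul_le_mul _ hIG hIG0 (by positivity)
    rw [hIF]
    apply mul_le_mul_of_nonneg_left hI1bd (by positivity)
  have heq : (243*ε^2 * ((3/2)*L)) * (2/ε) = 729*ε*L := by
    field_simp; ring
  calc ∫ u in GammaT, u.1 * QstarR r u ≤ (243*ε^2 * ((3/2)*L)) * (2/ε) := by
        refine le_trans step1 (le_trans step2 ?_)
        rw [step3]; exact final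
    _ = 729*ε*L := heq
    _ ≤ 1000*ε*L := by nlinarith [mul_nonneg hε.le hL0]
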